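/- Let f be a Laurent polynomial in two variables whose Newton polygon is a Fano polygon, and let φ = φ_{v,F} be an algebraic mutation with respect to which f is mutable, i.e. g = φ*f is again a Laurent polynomial. Then the Fano polygon Newt(f) is mutable with respect to the pair (v, Newt(F)), and Newt(g) = mut_{v, Newt(F)}(Newt(f)). -/

import Mathlib

noncomputable section
open Pointwise

abbrev M : Type := ℤ × ℤ
abbrev NN : Type := ℤ × ℤ

def toR (m : M) : ℝ × ℝ := ((m.1 : ℝ), (m.2 : ℝ))
def pairZ (u : NN) (m : M) : ℤ := u.1 * m.1 + u.2 * m.2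
def pairR (u : NN) (x : ℝ × ℝ) : ℝ := u.1 * x.1 + u.2 * x.2
def IsPrimitive (u : ℤ × ℤ) : Prop := Int.gcd u.1 u.2 = 1

/-- A full-dimensional convex lattice polygon in `ℝ²`. -/
def IsLatticePolygon (P : Set (ℝ × ℝ)) : Prop :=
  (∃ S : Finset M, P = convexHull ℝ (toR '' (S : Set M))) ∧ (interior P).Nonempty

/-- A Fano polygon: the origin is in the strict interior and all vertices are primitive. -/
def IsFanoPolygon (P : Set (ℝ × ℝ)) : Prop :=
  IsLatticePolygon P ∧ (0 : ℝ × ℝ) ∈ interior P ∧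
  ∀ x ∈ Set.extremePoints ℝ P, ∃ m : M, toR m = x ∧ IsPrimitive m

/-- The face of `P` cut out by the inward normal `u` at height `h`. -/
def edgeSet (P : Set (ℝ × ℝ)) (u : NN) (h : ℤ) : Set (ℝ × ℝ) :=
  {x ∈ P | pairR u x = -(h : ℝ)}

/-- `(u,h)` is the data of an edge of `P`: `u` a primitive inward normal, `h = h_E` the
lattice height, and the corresponding face is one-dimensional (not a single point). -/
def IsEdge (P : Set (ℝ × ℝ)) (u : NN) (h : ℤ) : Prop :=
  IsPrimitive u ∧ 0 < h ∧ (∀ x ∈ P, -(h : ℝ) ≤ pairR u x) ∧ ¬ (edgeSet P u h).Subsingleton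

def latticePts (E : Set (ℝ × ℝ)) : Set M := {m : M | toR m ∈ E}

/-- Lattice length of the edge of `P` with data `(u,h)`: number of lattice points minus one. -/
def latLen (P : Set (ℝ × ℝ)) (u : NN) (h : ℤ) : ℕ := (latticePts (edgeSet P u h)).ncard - 1

/-- A T-polygon: a Fano polygon such that `h_E ∣ ℓ_E` for every edge `E`. -/
def IsTPolygon (P : Set (ℝ × ℝ)) : Prop :=
  IsFanoPolygon P ∧ ∀ u h, IsEdge P u h → h.toNat ∣ latLen P u h

/-- The slice of `P` at height `h` with respect to `v`. -/
def sliceAt (P : Set (ℝ × ℝ)) (v : NN) (h : ℤ) : Set (ℝ × ℝ) := {x ∈ P | pairR v x = (h : ℝ)}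

def IsPolytope (Q : Set (ℝ × ℝ)) : Prop :=
  ∃ S : Finset (ℝ × ℝ), Q = convexHull ℝ (S : Set (ℝ × ℝ))

/-- Mutation data: `v` primitive in the dual lattice, `F` a lattice segment or point in `v^⊥`. -/
def IsMutationData (v : NN) (F : Set (ℝ × ℝ)) : Prop :=
  IsPrimitive v ∧ ∃ a b : M, pairZ v a = 0 ∧ pairZ v b = 0 ∧ F = segment ℝ (toR a) (toR b)

/-- `P` is mutable with respect to `(v,F)` (via the witnesses `G h`), and
`P' = mut_{v,F}(P)` is the corresponding mutation. -/
def IsMutationOf (v : NN) (F : Set (ℝ × ℝ)) (P P' : Set (ℝ × ℝ)) : Prop :=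
  IsMutationData v F ∧
  ∃ G : ℤ → Set (ℝ × ℝ),
    (∀ h : ℤ, h < 0 → IsPolytope (G h) ∧ sliceAt P v h = G h + ((-h : ℤ) : ℝ) • F) ∧
    P' = convexHull ℝ ((⋃ h : ℤ, ⋃ _ : h < 0, G h) ∪
      (⋃ h : ℤ, ⋃ _ : 0 ≤ h, (sliceAt P v h + (h : ℝ) • F)))

def IsPolyMutation (P P' : Set (ℝ × ℝ)) : Prop := ∃ v F, IsMutationOf v F P P'

def unimodMap (a b c d : ℤ) (x : ℝ × ℝ) : ℝ × ℝ :=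
  ((a : ℝ) * x.1 + (b : ℝ) * x.2, (c : ℝ) * x.1 + (d : ℝ) * x.2)

/-- `P'` is the image of `P` under a transformation in `GL₂(ℤ)`. -/
def IsUnimodularImage (P P' : Set (ℝ × ℝ)) : Prop :=
  ∃ a b c d : ℤ, (a * d - b * c = 1 ∨ a * d - b * c = -1) ∧ P' = unimodMap a b c d '' P

/-- Laurent polynomials in two variables. -/
abbrev LP := AddMonoidAlgebra ℂ M

instance : IsDomain LP := NoZeroDivisors.to_isDomain _

/-- The field of fractions `ℂ(x,y)`. -/
abbrev K := FractionRing LP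

def ι : LP →+* K := algebraMap LP K

/-- The monomial `x^m`. -/
def mono (m : M) : LP := AddMonoidAlgebra.single m 1

/-- The coefficient of the constant monomial. -/
def constTerm (f : LP) : ℂ := f.coeff 0

/-- The Newton polygon of a Laurent polynomial. -/
def Newt (f : LP) : Set (ℝ × ℝ) := convexHull ℝ (toR '' (f.coeff.support : Set M))

/-- `φ` is the algebraic mutation `φ_{v,F}` of the field of fractions: the (ℂ-linear) field
automorphism determined by `x^m ↦ x^m F^{⟨m,v⟩}`, where `v` is primitive and all monomials
of the factor `F` lie in `v^⊥`. -/
def IsAlgMutation (v : NN) (F : LP) (φ : K ≃+* K) : Prop :=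
  IsPrimitive v ∧ F ≠ 0 ∧ (∀ m ∈ F.coeff.support, pairZ v m = 0) ∧
  (∀ c : ℂ, φ (ι (AddMonoidAlgebra.single 0 c)) = ι (AddMonoidAlgebra.single 0 c)) ∧
  (∀ m : M, φ (ι (mono m)) = ι (mono m) * (ι F) ^ (pairZ v m))

/-- One mutation step between Laurent polynomials: `g = φ*f` is again a Laurent polynomial. -/
def MutStep (f g : LP) : Prop :=
  ∃ (v : NN) (F : LP) (φ : K ≃+* K), IsAlgMutation v F φ ∧ φ (ι f) = ι g

/-- Mutation equivalence: a finite chain of algebraic mutations all of whose intermediate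
pullbacks are Laurent polynomials. -/
def MutEquiv : LP → LP → Prop := Relation.ReflTransGen MutStep


-- ===== auxiliary development =====

/-- intersection point of the segment `[a,b]` with the level set `{ℓ = t}` -/
def cross (ℓ : (ℝ × ℝ) →ₗ[ℝ] ℝ) (t : ℝ) (a b : ℝ × ℝ) : ℝ × ℝ :=
  if ℓ a = ℓ b then a
  else ((ℓ b - t) / (ℓ b - ℓ a)) • a + ((t - ℓ a) / (ℓ b - ℓ a)) • b

def crossSet (ℓ : (ℝ × ℝ) →ₗ[ℝ] ℝ) (t : ℝ) (S : Finset (ℝ × ℝ)) : Finset (ℝ × ℝ) :=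
  ((S ×ˢ S).filter (fun p => ℓ p.1 ≤ t ∧ t ≤ ℓ p.2)).image (fun p => cross ℓ t p.1 p.2)

lemma cross_mem_slice (ℓ : (ℝ × ℝ) →ₗ[ℝ] ℝ) (t : ℝ) {a b : ℝ × ℝ} {C : Set (ℝ × ℝ)}
    (hC : Convex ℝ C) (ha : a ∈ C) (hb : b ∈ C) (hab : ℓ a ≤ t) (hbt : t ≤ ℓ b) :
    cross ℓ t a b ∈ C ∧ ℓ (cross ℓ t a b) = t := by
  unfold cross
  by_cases h : ℓ a = ℓ b
  · rw [if_pos h]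
    exact ⟨ha, le_antisymm hab (h ▸ hbt)⟩
  · have hD : 0 < ℓ b - ℓ a := by
      rcases lt_or_eq_of_le (hab.trans hbt) with h' | h'
      · linarith
      · exact absurd h' h
    have h1 : 0 ≤ (ℓ b - t) / (ℓ b - ℓ a) := div_nonneg (by linarith) hD.le
    have h2 : 0 ≤ (t - ℓ a) / (ℓ b - ℓ a) := div_nonneg (by linarith) hD.le
    have hsum : (ℓ b - t) / (ℓ b - ℓ a) + (t - ℓ a) / (ℓ b - ℓ a) = 1 := by
      field_simp
      ring
    rw [if_neg h]
    refine ⟨hC ha hb h1 h2 hsum, ?_⟩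
    have : ℓ (((ℓ b - t) / (ℓ b - ℓ a)) • a + ((t - ℓ a) / (ℓ b - ℓ a)) • b)
        = ((ℓ b - t) / (ℓ b - ℓ a)) * ℓ a + ((t - ℓ a) / (ℓ b - ℓ a)) * ℓ b := by
      simp [map_add, map_smul, smul_eq_mul]
    rw [this]
    field_simp
    ring

lemma sum_trichotomy {β : Type*} [AddCommMonoid β] (S : Finset (ℝ × ℝ))
    (f : (ℝ × ℝ) → ℝ) (t : ℝ) (F : (ℝ × ℝ) → β) :
    ∑ y ∈ S, F y = ∑ y ∈ S.filter (fun y => f y < t), F y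
      + ∑ y ∈ S.filter (fun y => f y = t), F y
      + ∑ y ∈ S.filter (fun y => t < f y), F y := by
  classical
  rw [← Finset.sum_filter_add_sum_filter_not S (fun y => f y < t) F, add_assoc]
  congr 1
  rw [← Finset.sum_filter_add_sum_filter_not (S.filter (fun y => ¬ f y < t))
    (fun y => f y = t) F, Finset.filter_filter, Finset.filter_filter]
  congr 1
  · apply Finset.sum_congr _ (fun _ _ => rfl)
    apply Finset.filter_congr
    intro y _
    constructor
    · rintro ⟨_, h2⟩; exact h2
    · intro h; exact ⟨by simp [h], h⟩
  · apply Finset.sum_congr _ (fun _ _ => rfl)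
    apply Finset.filter_congr
    intro y _
    constructor
    · rintro ⟨h1, h2⟩
      rcases lt_trichotomy (f y) t with h | h | h
      · exact absurd h h1
      · exact absurd h h2
      · exact h
    · intro h; exact ⟨not_lt.mpr h.le, ne_of_gt h⟩

lemma slice_convexHull (ℓ : (ℝ × ℝ) →ₗ[ℝ] ℝ) (t : ℝ) (S : Finset (ℝ × ℝ)) :
    {x ∈ convexHull ℝ (S : Set (ℝ × ℝ)) | ℓ x = t}
      = convexHull ℝ ((crossSet ℓ t S : Finset (ℝ × ℝ)) : Set (ℝ × ℝ)) := by
  classical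
  apply Set.Subset.antisymm
  · -- hard direction
    rintro x ⟨hx, hxt⟩
    rw [Finset.convexHull_eq] at hx
    obtain ⟨w, hw0, hw1, hwx⟩ := hx
    have hx' : ∑ y ∈ S, w y • y = x := by
      rw [← hwx, Finset.centerMass_eq_of_sum_1 _ _ hw1]
      simp
    set Sm := S.filter (fun y => ℓ y < t) with hSmdef
    set Sz := S.filter (fun y => ℓ y = t) with hSzdef
    set Sp := S.filter (fun y => t < ℓ y) with hSpdef
    set s : ℝ := ∑ a ∈ Sm, w a * (t - ℓ a) with hsdef
    set s' : ℝ := ∑ b ∈ Sp, w b * (ℓ b - t) with hs'def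
    have hwS : ∀ y ∈ Sm, 0 ≤ w y := fun y hy => hw0 y (Finset.mem_filter.mp hy).1
    have hwSp : ∀ y ∈ Sp, 0 ≤ w y := fun y hy => hw0 y (Finset.mem_filter.mp hy).1
    have hwSz : ∀ y ∈ Sz, 0 ≤ w y := fun y hy => hw0 y (Finset.mem_filter.mp hy).1
    have hs0 : 0 ≤ s := Finset.sum_nonneg (fun a ha => by
      have := (Finset.mem_filter.mp ha).2
      exact mul_nonneg (hwS a ha) (by linarith))
    have hLx : ∑ y ∈ S, w y * ℓ y = t := by
      have : ℓ x = ∑ y ∈ S, w y * ℓ y := by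
        rw [← hx', map_sum]
        exact Finset.sum_congr rfl (fun y _ => by simp [map_smul, smul_eq_mul])
      rw [← hxt, this]
    have hss' : s = s' := by
      have h0 : ∑ y ∈ S, w y * (ℓ y - t) = 0 := by
        have : ∑ y ∈ S, w y * (ℓ y - t) = (∑ y ∈ S, w y * ℓ y) - (∑ y ∈ S, w y) * t := by
          rw [Finset.sum_mul, ← Finset.sum_sub_distrib]
          exact Finset.sum_congr rfl (fun y _ => by ring)
        rw [this, hLx, hw1, one_mul, sub_self]
      have htri := sum_trichotomy S (fun y => ℓ y) t (fun y => w y * (ℓ y - t))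
      rw [h0] at htri
      have hz : ∑ y ∈ Sz, w y * (ℓ y - t) = 0 :=
        Finset.sum_eq_zero (fun y hy => by
          rw [(Finset.mem_filter.mp hy).2]; ring)
      have hm : ∑ y ∈ Sm, w y * (ℓ y - t) = -s := by
        rw [hsdef, ← Finset.sum_neg_distrib]
        exact Finset.sum_congr rfl (fun y _ => by ring)
      rw [← hSmdef, ← hSzdef, ← hSpdef] at htri
      rw [hm, hz, ← hs'def] at htri
      linarith
    have hmemQ : ∀ y ∈ Sz, y ∈ (crossSet ℓ t S : Set (ℝ × ℝ)) := by
      intro y hy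
      obtain ⟨hyS, hyt⟩ := Finset.mem_filter.mp hy
      have hc : cross ℓ t y y = y := by rw [cross, if_pos rfl]
      rw [Finset.mem_coe, crossSet, Finset.mem_image]
      exact ⟨(y, y), Finset.mem_filter.mpr ⟨Finset.mem_product.mpr ⟨hyS, hyS⟩,
        le_of_eq hyt, le_of_eq hyt.symm⟩, hc⟩
    by_cases hs : s = 0
    · -- degenerate case: all mass at height t
      have hs'0 : s' = 0 := hss' ▸ hs
      have hm0 : ∀ a ∈ Sm, w a = 0 := by
        intro a ha
        have h1 : ∀ y ∈ Sm, 0 ≤ w y * (t - ℓ y) := fun y hy =>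
          mul_nonneg (hwS y hy) (by have := (Finset.mem_filter.mp hy).2; linarith)
        have h2 := (Finset.sum_eq_zero_iff_of_nonneg h1).mp (by rw [← hsdef]; exact hs) a ha
        have h3 : 0 < t - ℓ a := by have := (Finset.mem_filter.mp ha).2; linarith
        rcases mul_eq_zero.mp h2 with h | h
        · exact h
        · linarith
      have hp0 : ∀ b ∈ Sp, w b = 0 := by
        intro b hb
        have h1 : ∀ y ∈ Sp, 0 ≤ w y * (ℓ y - t) := fun y hy =>
          mul_nonneg (hwSp y hy) (by have := (Finset.mem_filter.mp hy).2; linarith)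
        have h2 := (Finset.sum_eq_zero_iff_of_nonneg h1).mp (by rw [← hs'def]; exact hs'0) b hb
        have h3 : 0 < ℓ b - t := by have := (Finset.mem_filter.mp hb).2; linarith
        rcases mul_eq_zero.mp h2 with h | h
        · exact h
        · linarith
      have hxz : ∑ y ∈ Sz, w y • y = x := by
        have htri := sum_trichotomy S (fun y => ℓ y) t (fun y => w y • y)
        rw [hx'] at htri
        rw [← hSmdef, ← hSzdef, ← hSpdef] at htri
        have h1 : ∑ y ∈ Sm, w y • y = 0 :=
          Finset.sum_eq_zero (fun y hy => by rw [hm0 y hy, zero_smul])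
        have h2 : ∑ y ∈ Sp, w y • y = 0 :=
          Finset.sum_eq_zero (fun y hy => by rw [hp0 y hy, zero_smul])
        rw [h1, h2] at htri
        rw [htri]; abel
      have hwz1 : ∑ y ∈ Sz, w y = 1 := by
        have htri := sum_trichotomy S (fun y => ℓ y) t w
        rw [hw1, ← hSmdef, ← hSzdef, ← hSpdef] at htri
        rw [Finset.sum_eq_zero hm0, Finset.sum_eq_zero hp0] at htri
        linarith
      have hcm : Sz.centerMass w id = x := by
        rw [Finset.centerMass_eq_of_sum_1 _ _ hwz1]
        simpa using hxz
      rw [← hcm]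
      exact Finset.centerMass_mem_convexHull Sz hwSz (by rw [hwz1]; norm_num)
        (fun y hy => hmemQ y hy)
    · -- main case
      have hspos : 0 < s := lt_of_le_of_ne hs0 (Ne.symm hs)
      set Ω : (ℝ × ℝ) × (ℝ × ℝ) → ℝ := fun p =>
        if ℓ p.1 = t then s * w p.1
        else w p.1 * w p.2 * ((t - ℓ p.1) + (ℓ p.2 - t)) with hΩdef
      set Z : (ℝ × ℝ) × (ℝ × ℝ) → ℝ × ℝ := fun p => cross ℓ t p.1 p.2 with hZdef
      set T1 := Sm ×ˢ Sp with hT1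
      set T2 := Sz.image (fun y => (y, y)) with hT2
      have hT1mem : ∀ p ∈ T1, p.1 ∈ S ∧ p.2 ∈ S ∧ ℓ p.1 < t ∧ t < ℓ p.2 := by
        intro p hp
        obtain ⟨h1, h2⟩ := Finset.mem_product.mp hp
        exact ⟨(Finset.mem_filter.mp h1).1, (Finset.mem_filter.mp h2).1,
          (Finset.mem_filter.mp h1).2, (Finset.mem_filter.mp h2).2⟩
      have hdisj : Disjoint T1 T2 := by
        rw [Finset.disjoint_left]
        rintro p hp1 hp2
        obtain ⟨y, hy, rfl⟩ := Finset.mem_image.mp hp2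
        have h1 := (hT1mem _ hp1).2.2.1
        have h2 : ℓ y = t := (Finset.mem_filter.mp hy).2
        simp only at h1
        linarith
      have hinj : ∀ a ∈ Sz, ∀ b ∈ Sz, (a, (a : ℝ × ℝ)) = (b, b) → a = b :=
        fun a _ b _ h => congrArg Prod.fst h
      have hΩT2 : ∀ y ∈ Sz, Ω (y, y) = s * w y := by
        intro y hy
        rw [hΩdef]
        exact if_pos (Finset.mem_filter.mp hy).2
      have hΩT1 : ∀ p ∈ T1, Ω p = w p.1 * w p.2 * ((t - ℓ p.1) + (ℓ p.2 - t)) := by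
        intro p hp
        rw [hΩdef]
        exact if_neg (ne_of_lt (hT1mem p hp).2.2.1)
      have hsumT2 : ∑ p ∈ T2, Ω p = s * ∑ y ∈ Sz, w y := by
        rw [hT2, Finset.sum_image hinj, Finset.mul_sum]
        exact Finset.sum_congr rfl (fun y hy => hΩT2 y hy)
      have hsumT1 : ∑ p ∈ T1, Ω p = s * ((∑ a ∈ Sm, w a) + (∑ b ∈ Sp, w b)) := by
        rw [hT1, Finset.sum_product]
        have hinner : ∀ a ∈ Sm, ∑ b ∈ Sp, Ω (a, b)
            = (w a * (t - ℓ a)) * (∑ b ∈ Sp, w b) + w a * s' := by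
          intro a ha
          have hpt : ∀ b ∈ Sp, Ω (a, b)
              = (w a * (t - ℓ a)) * w b + w a * (w b * (ℓ b - t)) := by
            intro b hb
            have := hΩT1 (a, b) (Finset.mem_product.mpr ⟨ha, hb⟩)
            simp only at this
            rw [this]; ring
          rw [Finset.sum_congr rfl hpt, Finset.sum_add_distrib, ← Finset.mul_sum,
            ← Finset.mul_sum, hs'def]
        rw [Finset.sum_congr rfl hinner, Finset.sum_add_distrib, ← Finset.sum_mul,
          ← Finset.sum_mul, ← hsdef, hss']
        ring
      have hW1 : (∑ a ∈ Sm, w a) + (∑ y ∈ Sz, w y) + (∑ b ∈ Sp, w b) = 1 := by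
        have htri := sum_trichotomy S (fun y => ℓ y) t w
        rw [hw1, ← hSmdef, ← hSzdef, ← hSpdef] at htri
        linarith
      have hΩsum : ∑ p ∈ T1 ∪ T2, Ω p = s := by
        rw [Finset.sum_union hdisj, hsumT1, hsumT2]
        nlinarith [hW1]
      have hvecT2 : ∑ p ∈ T2, Ω p • Z p = s • (∑ y ∈ Sz, w y • y) := by
        rw [hT2, Finset.sum_image (by exact fun a ha b hb h => congrArg Prod.fst h),
          Finset.smul_sum]
        refine Finset.sum_congr rfl (fun y hy => ?_)
        have hZy : Z (y, y) = y := by rw [hZdef]; simp only; rw [cross, if_pos rfl]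
        rw [hΩT2 y hy, hZy, smul_smul]
      have hvecT1 : ∑ p ∈ T1, Ω p • Z p
          = s • ((∑ a ∈ Sm, w a • a) + (∑ b ∈ Sp, w b • b)) := by
        have hpt : ∀ p ∈ T1, Ω p • Z p
            = (w p.1 * (w p.2 * (ℓ p.2 - t))) • p.1
              + ((w p.1 * (t - ℓ p.1)) * w p.2) • p.2 := by
          intro p hp
          obtain ⟨h1S, h2S, hlt, hgt⟩ := hT1mem p hp
          have hD : ℓ p.2 - ℓ p.1 ≠ 0 := by linarith
          have hne : ℓ p.1 ≠ ℓ p.2 := by linarith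
          have hZp : Z p = ((ℓ p.2 - t) / (ℓ p.2 - ℓ p.1)) • p.1
              + ((t - ℓ p.1) / (ℓ p.2 - ℓ p.1)) • p.2 := by
            rw [hZdef]; simp only; rw [cross, if_neg hne]
          rw [hΩT1 p hp, hZp, smul_add, smul_smul, smul_smul]
          congr 1
          · congr 1
            field_simp
            ring
          · congr 1
            field_simp
            ring
        rw [Finset.sum_congr rfl hpt, Finset.sum_add_distrib, smul_add]
        congr 1
        · rw [Finset.sum_product]
          have h1 : ∀ a ∈ Sm, ∑ b ∈ Sp, (w a * (w b * (ℓ b - t))) • a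
              = (w a * s') • a := by
            intro a _
            rw [← Finset.sum_smul, ← Finset.mul_sum, hs'def]
          rw [Finset.sum_congr rfl h1, Finset.smul_sum]
          refine Finset.sum_congr rfl (fun a _ => ?_)
          rw [← hss', mul_comm, smul_smul]
        · rw [Finset.sum_product]
          have h2 : ∀ a ∈ Sm, ∑ b ∈ Sp, ((w a * (t - ℓ a)) * w b) • b
              = (w a * (t - ℓ a)) • (∑ b ∈ Sp, w b • b) := by
            intro a _
            rw [Finset.smul_sum]
            exact Finset.sum_congr rfl (fun b _ => by rw [smul_smul])
          rw [Finset.sum_congr rfl h2, ← Finset.sum_smul, ← hsdef]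
      have hΩvec : ∑ p ∈ T1 ∪ T2, Ω p • Z p = s • x := by
        rw [Finset.sum_union hdisj, hvecT1, hvecT2, ← smul_add]
        congr 1
        have htri := sum_trichotomy S (fun y => ℓ y) t (fun y => w y • y)
        rw [hx', ← hSmdef, ← hSzdef, ← hSpdef] at htri
        rw [htri]; abel
      have hΩ0 : ∀ p ∈ T1 ∪ T2, 0 ≤ Ω p := by
        intro p hp
        rcases Finset.mem_union.mp hp with hp | hp
        · obtain ⟨h1S, h2S, hlt, hgt⟩ := hT1mem p hp
          rw [hΩT1 p hp]
          exact mul_nonneg (mul_nonneg (hw0 p.1 h1S) (hw0 p.2 h2S)) (by linarith)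
        · obtain ⟨y, hy, rfl⟩ := Finset.mem_image.mp hp
          rw [hΩT2 y hy]
          exact mul_nonneg hspos.le (hwSz y hy)
      have hZmem : ∀ p ∈ T1 ∪ T2, Z p ∈ (crossSet ℓ t S : Set (ℝ × ℝ)) := by
        intro p hp
        rcases Finset.mem_union.mp hp with hp | hp
        · obtain ⟨h1S, h2S, hlt, hgt⟩ := hT1mem p hp
          rw [Finset.mem_coe, crossSet, Finset.mem_image]
          exact ⟨p, Finset.mem_filter.mpr ⟨Finset.mem_product.mpr ⟨h1S, h2S⟩,
            hlt.le, hgt.le⟩, rfl⟩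
        · obtain ⟨y, hy, rfl⟩ := Finset.mem_image.mp hp
          have hZy : Z (y, y) = y := by rw [hZdef]; simp only; rw [cross, if_pos rfl]
          rw [hZy]
          exact hmemQ y hy
      have hcm : (T1 ∪ T2).centerMass Ω Z = x := by
        rw [Finset.centerMass, hΩsum, hΩvec, inv_smul_smul₀ hs]
      rw [← hcm]
      exact Finset.centerMass_mem_convexHull _ hΩ0 (by rw [hΩsum]; exact hspos) hZmem
  · -- easy direction
    have hconv : Convex ℝ {x ∈ convexHull ℝ (S : Set (ℝ × ℝ)) | ℓ x = t} := by
      have : {x ∈ convexHull ℝ (S : Set (ℝ × ℝ)) | ℓ x = t}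
          = convexHull ℝ (S : Set (ℝ × ℝ)) ∩ {x | ℓ x = t} := rfl
      rw [this]
      exact (convex_convexHull ℝ _).inter (convex_hyperplane ℓ.isLinear t)
    apply convexHull_min _ hconv
    intro q hq
    rw [Finset.mem_coe, crossSet, Finset.mem_image] at hq
    obtain ⟨p, hp, rfl⟩ := hq
    obtain ⟨hpS, hple, hpge⟩ := Finset.mem_filter.mp hp
    obtain ⟨h1S, h2S⟩ := Finset.mem_product.mp hpS
    have := cross_mem_slice ℓ t (convex_convexHull ℝ (S : Set (ℝ × ℝ)))
      (subset_convexHull ℝ _ (Finset.mem_coe.mpr h1S))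
      (subset_convexHull ℝ _ (Finset.mem_coe.mpr h2S)) hple hpge
    exact ⟨this.1, this.2⟩

lemma masterA (ℓ : (ℝ × ℝ) →ₗ[ℝ] ℝ) (S : Finset (ℝ × ℝ)) (T Fh : Set (ℝ × ℝ))
    (hT : Convex ℝ T) (hFh : Convex ℝ Fh)
    (H1 : ∀ a ∈ S, 0 ≤ ℓ a → ∀ ψ ∈ Fh, a + ℓ a • ψ ∈ T)
    (H2 : ∀ a ∈ S, ℓ a < 0 → ∃ y ∈ T, ℓ y = ℓ a ∧ ∃ ψ' ∈ Fh, a = y + (-ℓ a) • ψ')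
    {x : ℝ × ℝ} (hx : x ∈ convexHull ℝ (S : Set (ℝ × ℝ))) (hx0 : 0 ≤ ℓ x)
    {ψ : ℝ × ℝ} (hψ : ψ ∈ Fh) : x + ℓ x • ψ ∈ T := by
  set t := ℓ x with htdef
  have hsl : x ∈ convexHull ℝ ((crossSet ℓ t S : Finset (ℝ × ℝ)) : Set (ℝ × ℝ)) := by
    rw [← slice_convexHull]; exact ⟨hx, rfl⟩
  have hRconv : Convex ℝ {z : ℝ × ℝ | z + t • ψ ∈ T} := by
    intro z1 hz1 z2 hz2 α β hα hβ hαβ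
    show (α • z1 + β • z2) + t • ψ ∈ T
    have he : (α • z1 + β • z2) + t • ψ = α • (z1 + t • ψ) + β • (z2 + t • ψ) := by
      match_scalars <;> first
        | ring1
        | linear_combination t * hαβ
        | linear_combination t * hαβ.symm
    rw [he]
    exact hT hz1 hz2 hα hβ hαβ
  suffices hQR : ((crossSet ℓ t S : Finset (ℝ × ℝ)) : Set (ℝ × ℝ))
      ⊆ {z : ℝ × ℝ | z + t • ψ ∈ T} by
    exact convexHull_min hQR hRconv hsl
  rintro q hq
  rw [Finset.mem_coe, crossSet, Finset.mem_image] at hq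
  obtain ⟨p, hp, rfl⟩ := hq
  obtain ⟨hpS, hple, hpge⟩ := Finset.mem_filter.mp hp
  obtain ⟨haS, hbS⟩ := Finset.mem_product.mp hpS
  by_cases hab : ℓ p.1 = ℓ p.2
  · have hat : ℓ p.1 = t := le_antisymm hple (hab ▸ hpge)
    have h1 := H1 p.1 haS (by rw [hat]; exact hx0) ψ hψ
    show cross ℓ t p.1 p.2 + t • ψ ∈ T
    rw [cross, if_pos hab, ← hat]
    exact h1
  · have hD : 0 < ℓ p.2 - ℓ p.1 := by
      rcases lt_or_eq_of_le (hple.trans hpge) with h' | h'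
      · linarith
      · exact absurd h' hab
    have hc1 : 0 ≤ (ℓ p.2 - t) / (ℓ p.2 - ℓ p.1) := div_nonneg (by linarith) hD.le
    have hc2 : 0 ≤ (t - ℓ p.1) / (ℓ p.2 - ℓ p.1) := div_nonneg (by linarith) hD.le
    have hc12 : (ℓ p.2 - t) / (ℓ p.2 - ℓ p.1) + (t - ℓ p.1) / (ℓ p.2 - ℓ p.1) = 1 := by
      field_simp
      ring
    have hct : ((ℓ p.2 - t) / (ℓ p.2 - ℓ p.1)) * ℓ p.1
        + ((t - ℓ p.1) / (ℓ p.2 - ℓ p.1)) * ℓ p.2 = t := by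
      field_simp
      ring
    have hb0 : 0 ≤ ℓ p.2 := le_trans hx0 hpge
    show cross ℓ t p.1 p.2 + t • ψ ∈ T
    rw [cross, if_neg hab]
    set c1 := (ℓ p.2 - t) / (ℓ p.2 - ℓ p.1) with hc1def
    set c2 := (t - ℓ p.1) / (ℓ p.2 - ℓ p.1) with hc2def
    by_cases ha0 : 0 ≤ ℓ p.1
    · have key : c1 • p.1 + c2 • p.2 + t • ψ
          = c1 • (p.1 + ℓ p.1 • ψ) + c2 • (p.2 + ℓ p.2 • ψ) := by
        match_scalars <;> first
          | ring1
          | linear_combination hct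
          | linear_combination hct.symm
      rw [key]
      exact hT (H1 p.1 haS ha0 ψ hψ) (H1 p.2 hbS hb0 ψ hψ) hc1 hc2 hc12
    · push_neg at ha0
      obtain ⟨y, hyT, hyl, ψ', hψ', hay⟩ := H2 p.1 haS ha0
      by_cases hc2b : c2 * ℓ p.2 = 0
      · have hc1a : c1 * ℓ p.1 ≤ 0 := mul_nonpos_of_nonneg_of_nonpos hc1 ha0.le
        have ht0 : t = 0 := by linarith [hct]
        have hc10 : c1 * ℓ p.1 = 0 := by linarith [hct]
        have hc1z : c1 = 0 := by
          rcases mul_eq_zero.mp hc10 with h' | h'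
          · exact h'
          · exact absurd h' (ne_of_lt ha0)
        have hc21 : c2 = 1 := by linarith [hc12]
        have hlb0 : ℓ p.2 = 0 := by
          rcases mul_eq_zero.mp hc2b with h' | h'
          · rw [hc21] at h'; norm_num at h'
          · exact h'
        have he : c1 • p.1 + c2 • p.2 + t • ψ = p.2 + ℓ p.2 • ψ := by
          rw [hc1z, hc21, ht0, hlb0]
          simp
        show c1 • p.1 + c2 • p.2 + t • ψ ∈ T
        rw [he]
        exact H1 p.2 hbS hb0 ψ hψ
      · have hc2bpos : 0 < c2 * ℓ p.2 :=
          lt_of_le_of_ne (mul_nonneg hc2 hb0) (Ne.symm hc2b)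
        have hr0 : 0 ≤ (c1 * (-ℓ p.1)) / (c2 * ℓ p.2) :=
          div_nonneg (mul_nonneg hc1 (by linarith)) hc2bpos.le
        have hr1 : (c1 * (-ℓ p.1)) / (c2 * ℓ p.2) ≤ 1 := by
          rw [div_le_one hc2bpos]
          nlinarith [hct, hx0]
        set r := (c1 * (-ℓ p.1)) / (c2 * ℓ p.2) with hrdef
        have hrmul : r * (c2 * ℓ p.2) = c1 * (-ℓ p.1) :=
          div_mul_cancel₀ _ (ne_of_gt hc2bpos)
        have hψ'' : ψ + r • (ψ' - ψ) ∈ Fh := by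
          have he : ψ + r • (ψ' - ψ) = (1 - r) • ψ + r • ψ' := by module
          rw [he]
          exact hFh hψ hψ' (by linarith) hr0 (by ring)
        have hbT := H1 p.2 hbS hb0 _ hψ''
        have key : c1 • p.1 + c2 • p.2 + t • ψ
            = c1 • y + c2 • (p.2 + ℓ p.2 • (ψ + r • (ψ' - ψ))) := by
          rw [hay]
          match_scalars <;> first
            | ring1
            | linear_combination hrmul
            | linear_combination hrmul.symm
            | linear_combination hct - hrmul
            | linear_combination hct.symm - hrmul
            | linear_combination hct + hrmul
            | linear_combination hct.symm + hrmul
            | linear_combination hct - hrmul.symm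
            | linear_combination hct + hrmul.symm
            | linear_combination hct.symm - hrmul.symm
            | linear_combination hct.symm + hrmul.symm
        show c1 • p.1 + c2 • p.2 + t • ψ ∈ T
        rw [key]
        exact hT hyT hbT hc1 hc2 hc12

lemma masterB (ℓ : (ℝ × ℝ) →ₗ[ℝ] ℝ) (S : Finset (ℝ × ℝ)) (T Fh : Set (ℝ × ℝ))
    (hT : Convex ℝ T) (hFh : Convex ℝ Fh) (hFne : Fh.Nonempty)
    (hF0 : ∀ ψ ∈ Fh, ℓ ψ = 0)
    (H1 : ∀ a ∈ S, 0 ≤ ℓ a → ∀ ψ ∈ Fh, a + ℓ a • ψ ∈ T)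
    (H2 : ∀ a ∈ S, ℓ a < 0 → ∃ y ∈ T, ℓ y = ℓ a ∧ ∃ ψ' ∈ Fh, a = y + (-ℓ a) • ψ')
    {x : ℝ × ℝ} (hx : x ∈ convexHull ℝ (S : Set (ℝ × ℝ))) (hx0 : ℓ x ≤ 0) :
    ∃ y ∈ T, ℓ y = ℓ x ∧ ∃ ψ ∈ Fh, x = y + (-ℓ x) • ψ := by
  obtain ⟨ψ₀, hψ₀⟩ := hFne
  have H2' : ∀ a ∈ S, ℓ a ≤ 0 →
      ∃ y ∈ T, ℓ y = ℓ a ∧ ∃ ψ' ∈ Fh, a = y + (-ℓ a) • ψ' := by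
    intro a haS ha
    rcases lt_or_eq_of_le ha with h | h
    · exact H2 a haS h
    · have h0 : ℓ a = 0 := h
      have hmem : a + ℓ a • ψ₀ ∈ T := H1 a haS (le_of_eq h0.symm) ψ₀ hψ₀
      have he : a + ℓ a • ψ₀ = a := by rw [h0, zero_smul, add_zero]
      exact ⟨a, he ▸ hmem, rfl, ψ₀, hψ₀, by rw [h0, neg_zero, zero_smul, add_zero]⟩
  set t := ℓ x with htdef
  have hsl : x ∈ convexHull ℝ ((crossSet ℓ t S : Finset (ℝ × ℝ)) : Set (ℝ × ℝ)) := by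
    rw [← slice_convexHull]; exact ⟨hx, rfl⟩
  set R : Set (ℝ × ℝ) :=
    {z : ℝ × ℝ | ∃ y ∈ T, ℓ y = t ∧ ∃ ψ ∈ Fh, z = y + (-t) • ψ} with hRdef
  have hRconv : Convex ℝ R := by
    rintro z1 ⟨y1, hy1, hl1, ψ1, hψ1, rfl⟩ z2 ⟨y2, hy2, hl2, ψ2, hψ2, rfl⟩ α β hα hβ hαβ
    refine ⟨α • y1 + β • y2, hT hy1 hy2 hα hβ hαβ, ?_,
      α • ψ1 + β • ψ2, hFh hψ1 hψ2 hα hβ hαβ, ?_⟩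
    · rw [map_add, map_smul, map_smul, hl1, hl2, smul_eq_mul, smul_eq_mul]
      linear_combination t * hαβ
    · match_scalars <;> first
        | ring1
        | linear_combination (-t) * hαβ
        | linear_combination (-t) * hαβ.symm
        | linear_combination t * hαβ
        | linear_combination t * hαβ.symm
  suffices hQR : ((crossSet ℓ t S : Finset (ℝ × ℝ)) : Set (ℝ × ℝ)) ⊆ R by
    exact convexHull_min hQR hRconv hsl
  rintro q hq
  rw [Finset.mem_coe, crossSet, Finset.mem_image] at hq
  obtain ⟨p, hp, rfl⟩ := hq
  obtain ⟨hpS, hple, hpge⟩ := Finset.mem_filter.mp hp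
  obtain ⟨haS, hbS⟩ := Finset.mem_product.mp hpS
  by_cases hab : ℓ p.1 = ℓ p.2
  · have hat : ℓ p.1 = t := le_antisymm hple (hab ▸ hpge)
    obtain ⟨y, hyT, hyl, ψ', hψ', hay⟩ := H2' p.1 haS (by rw [hat]; exact hx0)
    show cross ℓ t p.1 p.2 ∈ R
    rw [cross, if_pos hab]
    exact ⟨y, hyT, by rw [hyl, hat], ψ', hψ', by rw [← hat]; exact hay⟩
  · have hD : 0 < ℓ p.2 - ℓ p.1 := by
      rcases lt_or_eq_of_le (hple.trans hpge) with h' | h'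
      · linarith
      · exact absurd h' hab
    have hc1 : 0 ≤ (ℓ p.2 - t) / (ℓ p.2 - ℓ p.1) := div_nonneg (by linarith) hD.le
    have hc2 : 0 ≤ (t - ℓ p.1) / (ℓ p.2 - ℓ p.1) := div_nonneg (by linarith) hD.le
    have hc12 : (ℓ p.2 - t) / (ℓ p.2 - ℓ p.1) + (t - ℓ p.1) / (ℓ p.2 - ℓ p.1) = 1 := by
      field_simp
      ring
    have hct : ((ℓ p.2 - t) / (ℓ p.2 - ℓ p.1)) * ℓ p.1
        + ((t - ℓ p.1) / (ℓ p.2 - ℓ p.1)) * ℓ p.2 = t := by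
      field_simp
      ring
    show cross ℓ t p.1 p.2 ∈ R
    rw [cross, if_neg hab]
    set c1 := (ℓ p.2 - t) / (ℓ p.2 - ℓ p.1) with hc1def
    set c2 := (t - ℓ p.1) / (ℓ p.2 - ℓ p.1) with hc2def
    by_cases hb0 : ℓ p.2 ≤ 0
    · have ha1 : ℓ p.1 < 0 := by linarith
      obtain ⟨y1, hy1, hl1, ψ1, hψ1, hay1⟩ := H2 p.1 haS ha1
      obtain ⟨y2, hy2, hl2, ψ2, hψ2, hay2⟩ := H2' p.2 hbS hb0
      have hlY : ℓ (c1 • y1 + c2 • y2) = t := by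
        rw [map_add, map_smul, map_smul, hl1, hl2, smul_eq_mul, smul_eq_mul]
        linear_combination hct
      by_cases ht0 : t = 0
      · have hz1 : c1 * (-ℓ p.1) = 0 := by
          have h1 : 0 ≤ c1 * (-ℓ p.1) := mul_nonneg hc1 (by linarith)
          have h2 : 0 ≤ c2 * (-ℓ p.2) := mul_nonneg hc2 (by linarith)
          nlinarith [hct]
        have hz2 : c2 * (-ℓ p.2) = 0 := by
          have h1 : 0 ≤ c1 * (-ℓ p.1) := mul_nonneg hc1 (by linarith)
          have h2 : 0 ≤ c2 * (-ℓ p.2) := mul_nonneg hc2 (by linarith)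
          nlinarith [hct]
        refine ⟨c1 • y1 + c2 • y2, hT hy1 hy2 hc1 hc2 hc12, hlY, ψ₀, hψ₀, ?_⟩
        rw [hay1, hay2, ht0]
        match_scalars <;> first
          | ring1
          | linear_combination hz1
          | linear_combination hz1.symm
          | linear_combination hz2
          | linear_combination hz2.symm
      · have htneg : 0 < -t := by
          rcases lt_or_eq_of_le hx0 with h' | h'
          · linarith
          · exact absurd h' ht0
        obtain ⟨d1, hd1⟩ : ∃ d : ℝ, d = c1 * (-ℓ p.1) / (-t) := ⟨_, rfl⟩
        obtain ⟨d2, hd2⟩ : ∃ d : ℝ, d = c2 * (-ℓ p.2) / (-t) := ⟨_, rfl⟩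
        have hmul1 : (-t) * d1 = c1 * (-ℓ p.1) := by
          rw [hd1]
          field_simp
        have hmul2 : (-t) * d2 = c2 * (-ℓ p.2) := by
          rw [hd2]
          field_simp
        have hsum1 : d1 + d2 = 1 := by
          rw [hd1, hd2, ← add_div, div_eq_one_iff_eq (ne_of_gt htneg)]
          linear_combination -hct
        have hψs : d1 • ψ1 + d2 • ψ2 ∈ Fh :=
          hFh hψ1 hψ2
            (by rw [hd1]; exact div_nonneg (mul_nonneg hc1 (by linarith)) htneg.le)
            (by rw [hd2]; exact div_nonneg (mul_nonneg hc2 (by linarith)) htneg.le) hsum1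
        refine ⟨c1 • y1 + c2 • y2, hT hy1 hy2 hc1 hc2 hc12, hlY, _, hψs, ?_⟩
        rw [hay1, hay2]
        match_scalars <;> first
          | ring1
          | linear_combination hmul1
          | linear_combination hmul1.symm
          | linear_combination hmul2
          | linear_combination hmul2.symm
          | linear_combination -hmul1
          | linear_combination -hmul2
    · push_neg at hb0
      by_cases hc2z : c2 = 0
      · have hta : t = ℓ p.1 := by
          have : (t - ℓ p.1) / (ℓ p.2 - ℓ p.1) = 0 := hc2z
          field_simp at this
          linarith
        obtain ⟨y, hyT, hyl, ψ', hψ', hay⟩ := H2' p.1 haS (by rw [← hta]; exact hx0)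
        have hc11 : c1 = 1 := by rw [← hc12, hc2z, add_zero]
        refine ⟨y, hyT, by rw [hyl, hta], ψ', hψ', ?_⟩
        rw [hc11, hc2z, one_smul, zero_smul, add_zero, hay, hta]
      · have hc2pos : 0 < c2 := lt_of_le_of_ne hc2 (Ne.symm hc2z)
        have ha1 : ℓ p.1 < 0 := by
          by_contra hcon
          push_neg at hcon
          have : 0 < t - ℓ p.1 := by
            have := mul_pos hc2pos hD
            rw [hc2def, div_mul_cancel₀ _ (ne_of_gt hD)] at this
            linarith
          linarith
        obtain ⟨y, hyT, hyl, ψ', hψ', hay⟩ := H2 p.1 haS ha1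
        have hbT : p.2 + ℓ p.2 • ψ' ∈ T := H1 p.2 hbS hb0.le ψ' hψ'
        have hlY : ℓ (c1 • y + c2 • (p.2 + ℓ p.2 • ψ')) = t := by
          rw [map_add, map_smul, map_smul, map_add, map_smul, hyl,
            hF0 ψ' hψ', smul_eq_mul, smul_eq_mul, smul_eq_mul]
          linear_combination hct
        refine ⟨c1 • y + c2 • (p.2 + ℓ p.2 • ψ'), hT hyT hbT hc1 hc2 hc12, hlY,
          ψ', hψ', ?_⟩
        rw [hay]
        match_scalars <;> first
          | ring1
          | linear_combination hct
          | linear_combination hct.symm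
          | linear_combination -hct

lemma toR_add (a b : M) : toR (a + b) = toR a + toR b := by
  simp [toR, Prod.ext_iff]

lemma toR_inj : Function.Injective toR := by
  intro a b h
  have h1 : (a.1 : ℝ) = b.1 := congrArg Prod.fst h
  have h2 : (a.2 : ℝ) = b.2 := congrArg Prod.snd h
  exact Prod.ext (by exact_mod_cast h1) (by exact_mod_cast h2)

/-- `pairR v` as a linear map. -/
def pairLin (v : NN) : (ℝ × ℝ) →ₗ[ℝ] ℝ where
  toFun := pairR v
  map_add' x y := by simp [pairR]; ring
  map_smul' c x := by simp [pairR]; ring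

lemma pairLin_apply (v : NN) (x : ℝ × ℝ) : pairLin v x = pairR v x := rfl

lemma pairR_toR (v : NN) (m : M) : pairR v (toR m) = (pairZ v m : ℝ) := by
  simp [pairR, pairZ, toR]

lemma pairZ_add (v : NN) (a b : M) : pairZ v (a + b) = pairZ v a + pairZ v b := by
  simp [pairZ]; ring

lemma Newt_convex (p : LP) : Convex ℝ (Newt p) := convex_convexHull ℝ _

lemma Newt_nonempty {p : LP} (hp : p ≠ 0) : (Newt p).Nonempty := by
  obtain ⟨m, hm⟩ := Finsupp.support_nonempty_iff.mpr (show p.coeff ≠ 0 by simpa using hp)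
  exact ⟨toR m, subset_convexHull ℝ _ ⟨m, by simpa using hm, rfl⟩⟩

lemma Newt_mono {p q : LP} (h : p.coeff.support ⊆ q.coeff.support) : Newt p ⊆ Newt q :=
  convexHull_mono (Set.image_mono (by exact_mod_cast h))

lemma Newt_mul (p q : LP) (hp : p ≠ 0) (hq : q ≠ 0) : Newt (p * q) = Newt p + Newt q := by
  classical
  apply Set.Subset.antisymm
  · rw [Newt, Newt, Newt, ← convexHull_add]
    apply convexHull_mono
    rintro x ⟨m, hm, rfl⟩
    have hmem := AddMonoidAlgebra.support_coeff_mul_subset p q (by exact_mod_cast hm)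
    obtain ⟨a, ha, b, hb, rfl⟩ := Finset.mem_add.mp hmem
    exact ⟨toR a, ⟨a, by exact_mod_cast ha, rfl⟩, toR b, ⟨b, by exact_mod_cast hb, rfl⟩,
      (toR_add a b).symm⟩
  · set A : Set (ℝ × ℝ) := toR '' (p.coeff.support : Set M) with hA
    set B : Set (ℝ × ℝ) := toR '' (q.coeff.support : Set M) with hB
    have hsum : Newt p + Newt q = convexHull ℝ (A + B) := (convexHull_add A B).symm
    rw [hsum]
    have hfin : (A + B).Finite := (p.coeff.support.finite_toSet.image toR).add
      (q.coeff.support.finite_toSet.image toR)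
    have hcomp : IsCompact (convexHull ℝ (A + B)) := hfin.isCompact_convexHull (𝕜 := ℝ)
    have hconv : Convex ℝ (convexHull ℝ (A + B)) := convex_convexHull ℝ _
    have hext : Set.extremePoints ℝ (convexHull ℝ (A + B)) ⊆ A + B :=
      extremePoints_convexHull_subset
    have hclosed : IsClosed (convexHull ℝ (Set.extremePoints ℝ (convexHull ℝ (A + B)))) :=
      (hfin.subset hext).isClosed_convexHull (𝕜 := ℝ)
    have hKM : convexHull ℝ (A + B)
        = convexHull ℝ (Set.extremePoints ℝ (convexHull ℝ (A + B))) := by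
      conv_lhs => rw [← closure_convexHull_extremePoints hcomp hconv]
      exact hclosed.closure_eq
    rw [hKM]
    apply convexHull_min _ (Newt_convex _)
    intro z hz
    obtain ⟨xa, hxa, xb, hxb, hzab⟩ := hext hz
    obtain ⟨a₀, ha₀, rfl⟩ := hxa
    obtain ⟨b₀, hb₀, rfl⟩ := hxb
    replace hzab : toR a₀ + toR b₀ = z := hzab
    -- uniqueness of the decomposition of the extreme point z
    have huniq : ∀ a ∈ p.coeff.support, ∀ b ∈ q.coeff.support, a + b = a₀ + b₀ → a = a₀ ∧ b = b₀ := by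
      intro a ha b hb hab
      have hu : toR a + toR b₀ ∈ convexHull ℝ (A + B) :=
        subset_convexHull ℝ _ ⟨toR a, ⟨a, by exact_mod_cast ha, rfl⟩,
          toR b₀, ⟨b₀, by exact_mod_cast hb₀, rfl⟩, rfl⟩
      have hw : toR a₀ + toR b ∈ convexHull ℝ (A + B) :=
        subset_convexHull ℝ _ ⟨toR a₀, ⟨a₀, by exact_mod_cast ha₀, rfl⟩,
          toR b, ⟨b, by exact_mod_cast hb, rfl⟩, rfl⟩
      have hab' : toR a + toR b = z := by rw [← toR_add, hab, toR_add, hzab]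
      have hmid : (1/2 : ℝ) • (toR a + toR b₀) + (1/2 : ℝ) • (toR a₀ + toR b) = z := by
        have : (toR a + toR b₀) + (toR a₀ + toR b) = z + z := by
          calc (toR a + toR b₀) + (toR a₀ + toR b)
              = (toR a + toR b) + (toR a₀ + toR b₀) := by abel
            _ = z + z := by rw [hab', hzab]
        rw [← smul_add, this, ← two_smul ℝ z, smul_smul]
        norm_num
      have heq : toR a + toR b₀ = z := by
        by_cases hcase : toR a + toR b₀ = z
        · exact hcase
        · exfalso
          have hne : toR a + toR b₀ ≠ toR a₀ + toR b := by
            intro h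
            apply hcase
            have : (toR a + toR b₀) + (toR a + toR b₀) = z + z := by
              nth_rewrite 2 [h]
              calc (toR a + toR b₀) + (toR a₀ + toR b)
                  = (toR a + toR b) + (toR a₀ + toR b₀) := by abel
                _ = z + z := by rw [hab', hzab]
            have h2 : (2:ℝ) • (toR a + toR b₀) = (2:ℝ) • z := by
              rw [two_smul, two_smul, this]
            have := smul_right_injective (ℝ × ℝ) (two_ne_zero (α := ℝ)) h2
            exact this
          have hopen : z ∈ openSegment ℝ (toR a + toR b₀) (toR a₀ + toR b) :=
            ⟨1/2, 1/2, by norm_num, by norm_num, by norm_num, hmid⟩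
          exact hcase ((mem_extremePoints.mp hz).2 _ hu _ hw hopen).1
      have ha' : toR a = toR a₀ := by
        have : toR a + toR b₀ = toR a₀ + toR b₀ := by rw [heq, hzab]
        exact add_right_cancel this
      have haa : a = a₀ := toR_inj ha'
      refine ⟨haa, ?_⟩
      have : a₀ + b = a₀ + b₀ := by rw [← hab, haa]
      exact add_left_cancel this
    -- the coefficient of `z` in `p * q` is nonzero
    have hcoef : (p * q).coeff (a₀ + b₀) = p.coeff a₀ * q.coeff b₀ := by
      rw [AddMonoidAlgebra.coeff_mul]
      rw [Finsupp.sum]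
      rw [Finset.sum_eq_single_of_mem a₀ (by exact_mod_cast ha₀) ?_]
      · rw [Finsupp.sum]
        rw [Finset.sum_eq_single_of_mem b₀ (by exact_mod_cast hb₀) ?_]
        · rw [if_pos rfl]
        · intro b hb hbne
          rw [if_neg]
          intro habs
          exact hbne (huniq a₀ (by exact_mod_cast ha₀) b hb habs).2
      · intro a ha hane
        rw [Finsupp.sum]
        apply Finset.sum_eq_zero
        intro b hb
        rw [if_neg]
        intro habs
        exact hane (huniq a ha b hb habs).1
    have hne : (p * q).coeff (a₀ + b₀) ≠ 0 := by
      rw [hcoef]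
      exact mul_ne_zero (Finsupp.mem_support_iff.mp (by exact_mod_cast ha₀))
        (Finsupp.mem_support_iff.mp (by exact_mod_cast hb₀))
    rw [← hzab, ← toR_add]
    exact subset_convexHull ℝ _ ⟨a₀ + b₀, by
      simpa using Finsupp.mem_support_iff.mpr hne, rfl⟩

lemma Newt_one : Newt (1 : LP) = {(0 : ℝ × ℝ)} := by
  rw [Newt, AddMonoidAlgebra.one_def, AddMonoidAlgebra.coeff_single, Finsupp.support_single_ne_zero _ one_ne_zero]
  have : (toR '' (({0} : Finset M) : Set M)) = {(0 : ℝ × ℝ)} := by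
    simp [toR, Prod.ext_iff]
  rw [this, convexHull_singleton]

lemma Newt_pow (F : LP) (hF : F ≠ 0) (n : ℕ) : Newt (F ^ n) = (n : ℝ) • Newt F := by
  induction n with
  | zero =>
    rw [pow_zero, Newt_one, Nat.cast_zero, Set.zero_smul_set (Newt_nonempty hF)]
    rfl
  | succ n ih =>
    rw [pow_succ, Newt_mul _ _ (pow_ne_zero n hF) hF, ih, Nat.cast_succ,
      Convex.add_smul (Newt_convex F) (by positivity) zero_le_one, one_smul]

lemma Newt_subset_hyperplane {v : NN} {p : LP} {h : ℤ}
    (hp : ∀ m ∈ p.coeff.support, pairZ v m = h) :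
    ∀ x ∈ Newt p, pairR v x = (h : ℝ) := by
  intro x hx
  have hsub : toR '' (p.coeff.support : Set M) ⊆ {x | pairLin v x = (h : ℝ)} := by
    rintro _ ⟨m, hm, rfl⟩
    show pairLin v (toR m) = (h : ℝ)
    rw [pairLin_apply, pairR_toR, hp m (by exact_mod_cast hm)]
  have := convexHull_min hsub (convex_hyperplane (pairLin v).isLinear ((h : ℝ))) hx
  exact this

lemma mutation_data (v : NN) (F : LP) (hprim : IsPrimitive v) (hF0 : F ≠ 0)
    (hFv : ∀ m ∈ F.coeff.support, pairZ v m = 0) :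
    ∃ a b : M, pairZ v a = 0 ∧ pairZ v b = 0 ∧ Newt F = segment ℝ (toR a) (toR b) := by
  classical
  have hcop : IsCoprime (v.1) (v.2) := Int.isCoprime_iff_gcd_eq_one.mpr hprim
  obtain ⟨A, B, hAB⟩ := hcop
  set tfun : M → ℤ := fun m => A * m.2 - B * m.1 with htfun
  have hstruct : ∀ m : M, pairZ v m = 0 → m = (-v.2 * tfun m, v.1 * tfun m) := by
    intro m hv
    rw [pairZ] at hv
    refine Prod.ext ?_ ?_
    · show m.1 = -v.2 * (A * m.2 - B * m.1)
      linear_combination A * hv - m.1 * hAB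
    · show m.2 = v.1 * (A * m.2 - B * m.1)
      linear_combination B * hv - m.2 * hAB
  have hsupp : F.coeff.support.Nonempty := Finsupp.support_nonempty_iff.mpr (by simpa using hF0)
  set cs := F.coeff.support.image tfun with hcsdef
  have hcsne : cs.Nonempty := hsupp.image _
  set cmin := cs.min' hcsne with hcmindef
  set cmax := cs.max' hcsne with hcmaxdef
  have htoR : ∀ t : ℤ, toR (-v.2 * t, v.1 * t) = (t : ℝ) • toR (-v.2, v.1) := by
    intro t
    refine Prod.ext ?_ ?_
    · show ((-v.2 * t : ℤ) : ℝ) = (t : ℝ) * ((-v.2 : ℤ) : ℝ)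
      push_cast
      ring
    · show ((v.1 * t : ℤ) : ℝ) = (t : ℝ) * ((v.1 : ℤ) : ℝ)
      push_cast
      ring
  have hseg : ∀ s : ℤ, cmin ≤ s → s ≤ cmax →
      ((s : ℝ)) • toR (-v.2, v.1) ∈
        segment ℝ ((cmin : ℝ) • toR (-v.2, v.1)) ((cmax : ℝ) • toR (-v.2, v.1)) := by
    intro s h1 h2
    by_cases hc : cmin = cmax
    · have hs : s = cmin := le_antisymm (hc ▸ h2) h1
      rw [hs]
      exact left_mem_segment ℝ _ _
    · have hlt : (cmin : ℝ) < (cmax : ℝ) := by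
        exact_mod_cast lt_of_le_of_ne (h1.trans h2) hc
      have hne : (cmax : ℝ) - cmin ≠ 0 := by linarith
      refine ⟨((cmax : ℝ) - s) / ((cmax : ℝ) - cmin), ((s : ℝ) - cmin) / ((cmax : ℝ) - cmin),
        div_nonneg (by exact_mod_cast sub_nonneg.mpr h2) (by linarith),
        div_nonneg (by exact_mod_cast sub_nonneg.mpr h1) (by linarith),
        by field_simp; ring, ?_⟩
      match_scalars
      field_simp
      ring
  refine ⟨(-v.2 * cmin, v.1 * cmin), (-v.2 * cmax, v.1 * cmax),
    by show v.1 * (-v.2 * cmin) + v.2 * (v.1 * cmin) = 0; ring,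
    by show v.1 * (-v.2 * cmax) + v.2 * (v.1 * cmax) = 0; ring, ?_⟩
  rw [htoR cmin, htoR cmax]
  apply Set.Subset.antisymm
  · apply convexHull_min _ (convex_segment _ _)
    rintro x ⟨m, hm, rfl⟩
    have hm' : m ∈ F.coeff.support := by exact_mod_cast hm
    have h0 := hFv m hm'
    have h1 : cmin ≤ tfun m := Finset.min'_le cs _ (Finset.mem_image_of_mem _ hm')
    have h2 : tfun m ≤ cmax := Finset.le_max' cs _ (Finset.mem_image_of_mem _ hm')
    have hms := hstruct m h0
    rw [show toR m = ((tfun m : ℝ)) • toR (-v.2, v.1) by rw [← htoR]; exact congrArg toR hms]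
    exact hseg _ h1 h2
  · have hminmem := Finset.min'_mem cs hcsne
    have hmaxmem := Finset.max'_mem cs hcsne
    obtain ⟨m₀, hm₀, htm₀⟩ := Finset.mem_image.mp hminmem
    obtain ⟨m₁, hm₁, htm₁⟩ := Finset.mem_image.mp hmaxmem
    have he₀ : m₀ = (-v.2 * cmin, v.1 * cmin) := by
      rw [hcmindef, ← htm₀]
      exact hstruct m₀ (hFv m₀ hm₀)
    have he₁ : m₁ = (-v.2 * cmax, v.1 * cmax) := by
      rw [hcmaxdef, ← htm₁]
      exact hstruct m₁ (hFv m₁ hm₁)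
    apply segment_subset_convexHull
    · exact ⟨m₀, by exact_mod_cast hm₀, by rw [he₀, htoR]⟩
    · exact ⟨m₁, by exact_mod_cast hm₁, by rw [he₁, htoR]⟩

lemma pairZ_zero (v : NN) : pairZ v 0 = 0 := by simp [pairZ]

/-- the height-`h` part of a Laurent polynomial -/
def piH (v : NN) (h : ℤ) (p : LP) : LP :=
  AddMonoidAlgebra.ofCoeff (Finsupp.filter (fun m => pairZ v m = h) p.coeff)

lemma piH_add (v : NN) (h : ℤ) (p q : LP) : piH v h (p + q) = piH v h p + piH v h q :=
  congrArg AddMonoidAlgebra.ofCoeff Finsupp.filter_add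

lemma piH_apply (v : NN) (h : ℤ) (p : LP) (m : M) :
    (piH v h p).coeff m = if pairZ v m = h then p.coeff m else 0 :=
  Finsupp.filter_apply _ p.coeff m

lemma support_piH (v : NN) (h : ℤ) (p : LP) :
    (piH v h p).coeff.support = p.coeff.support.filter (fun m => pairZ v m = h) :=
  Finsupp.support_filter _ p.coeff

lemma piH_eq_self {v : NN} {h : ℤ} {p : LP} (hp : ∀ m ∈ p.coeff.support, pairZ v m = h) :
    piH v h p = p :=
  congrArg AddMonoidAlgebra.ofCoeff
    ((Finsupp.filter_eq_self_iff _ p.coeff).mpr (fun m hm => hp m (Finsupp.mem_support_iff.mpr hm)))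

lemma piH_eq_zero {v : NN} {h : ℤ} {p : LP} (hp : ∀ m ∈ p.coeff.support, pairZ v m ≠ h) :
    piH v h p = 0 :=
  congrArg AddMonoidAlgebra.ofCoeff ((Finsupp.filter_eq_zero_iff _ p.coeff).mpr (fun m hm => by
    by_contra hne
    exact hp m (Finsupp.mem_support_iff.mpr hne) hm))

lemma supp_mul_zero_height {v : NN} {a b : LP} (ha : ∀ m ∈ a.coeff.support, pairZ v m = 0)
    (hb : ∀ m ∈ b.coeff.support, pairZ v m = 0) : ∀ m ∈ (a * b).coeff.support, pairZ v m = 0 := by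
  classical
  intro m hm
  obtain ⟨x, hx, y, hy, rfl⟩ := Finset.mem_add.mp (AddMonoidAlgebra.support_coeff_mul_subset a b hm)
  rw [pairZ_add, ha x hx, hb y hy, add_zero]

lemma supp_pow_zero_height {v : NN} {b : LP} (hb : ∀ m ∈ b.coeff.support, pairZ v m = 0) (n : ℕ) :
    ∀ m ∈ (b ^ n).coeff.support, pairZ v m = 0 := by
  induction n with
  | zero =>
    intro m hm
    simp only [pow_zero] at hm
    have : ((1 : LP)).coeff.support ⊆ {0} := by
      rw [AddMonoidAlgebra.one_def]
      exact Finsupp.support_single_subset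
    have := this hm
    simp only [Finset.mem_singleton] at this
    rw [this, pairZ_zero]
  | succ n ih =>
    intro m hm
    rw [pow_succ] at hm
    exact supp_mul_zero_height ih hb m hm

lemma piH_mul_right0 (v : NN) (h : ℤ) (a b : LP)
    (hb : ∀ m ∈ b.coeff.support, pairZ v m = 0) :
    piH v h (a * b) = piH v h a * b := by
  classical
  induction a using AddMonoidAlgebra.induction_linear with
  | zero => simp only [piH, zero_mul, AddMonoidAlgebra.coeff_zero, Finsupp.filter_zero]; rfl
  | add f g hf hg => rw [add_mul, piH_add, hf, hg, piH_add, add_mul]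
  | single m c =>
    have hsupp : ∀ y ∈ ((AddMonoidAlgebra.single m c : LP) * b).coeff.support,
        pairZ v y = pairZ v m := by
      intro y hy
      obtain ⟨x, hx, z, hz, rfl⟩ := Finset.mem_add.mp (AddMonoidAlgebra.support_coeff_mul_subset _ b hy)
      have hxm : x = m := Finset.mem_singleton.mp (Finsupp.support_single_subset (by simpa using hx))
      rw [pairZ_add, hxm, hb z hz, add_zero]
    by_cases hh : pairZ v m = h
    · rw [piH_eq_self (fun y hy => by rw [hsupp y hy, hh])]
      rw [show piH v h (AddMonoidAlgebra.single m c) = AddMonoidAlgebra.single m c from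
        congrArg AddMonoidAlgebra.ofCoeff (Finsupp.filter_single_of_pos _ hh)]
    · rw [piH_eq_zero (fun y hy => by rw [hsupp y hy]; exact hh)]
      rw [show piH v h (AddMonoidAlgebra.single m c) = 0 from
        congrArg AddMonoidAlgebra.ofCoeff (Finsupp.filter_single_of_neg _ hh), zero_mul]

lemma ι_inj : Function.Injective ι := IsFractionRing.injective LP K

lemma ι_ne_zero {p : LP} (hp : p ≠ 0) : ι p ≠ 0 := by
  intro h
  exact hp (ι_inj (by rw [h, map_zero]))

set_option synthInstance.maxHeartbeats 1000000 in
/-- The master algebraic identity. -/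
lemma key_identity (f g F : LP) (v : NN) (φ : K ≃+* K)
    (hφ : IsAlgMutation v F φ) (hg : φ (ι f) = ι g) (N : ℕ)
    (hN : ∀ m ∈ f.coeff.support, 0 ≤ pairZ v m + N) :
    g * F ^ N = ∑ m ∈ f.coeff.support, AddMonoidAlgebra.single m (f.coeff m) * F ^ (pairZ v m + N).toNat := by
  classical
  obtain ⟨hprim, hF0, hFv, hconst, hmono⟩ := hφ
  have hιF : (ι F) ≠ 0 := ι_ne_zero hF0
  apply ι_inj
  rw [map_mul, ← hg, map_sum]
  have hf : ι f = ∑ m ∈ f.coeff.support, ι (AddMonoidAlgebra.single m (f.coeff m)) := by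
    rw [← map_sum]
    congr 1
    conv_lhs => rw [← AddMonoidAlgebra.sum_coeff_single f]
    rfl
  rw [hf, map_sum, Finset.sum_mul]
  refine Finset.sum_congr rfl (fun m hm => ?_)
  have hsingle : (AddMonoidAlgebra.single m (f.coeff m) : LP)
      = AddMonoidAlgebra.single 0 (f.coeff m) * mono m := by
    rw [mono, AddMonoidAlgebra.single_mul_single, zero_add, mul_one]
  have hpow : ι (F ^ (pairZ v m + N).toNat) = (ι F) ^ (pairZ v m) * (ι F) ^ (N : ℤ) := by
    rw [← zpow_add₀ hιF, map_pow, ← zpow_natCast (ι F) ((pairZ v m + N).toNat),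
      Int.toNat_of_nonneg (hN m hm)]
  rw [hsingle, map_mul, map_mul, hconst, hmono, map_mul, map_mul, hpow, map_pow,
    ← zpow_natCast (ι F) N]
  ring

lemma piH_sum {α : Type*} (v : NN) (h : ℤ) (s : Finset α) (G : α → LP) :
    piH v h (∑ i ∈ s, G i) = ∑ i ∈ s, piH v h (G i) := by
  classical
  induction s using Finset.induction with
  | empty => simp [piH, Finsupp.filter_zero]
  | insert _ _ hx ih =>
    rw [Finset.sum_insert hx, Finset.sum_insert hx, piH_add, ih]

lemma piH_as_sum (v : NN) (h : ℤ) (f : LP) :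
    piH v h f = ∑ m ∈ f.coeff.support.filter (fun m => pairZ v m = h),
      AddMonoidAlgebra.single m (f.coeff m) := by
  classical
  conv_lhs => rw [← AddMonoidAlgebra.sum_coeff_single f]
  rw [Finsupp.sum, piH_sum, Finset.sum_filter]
  refine Finset.sum_congr rfl fun m hm => ?_
  by_cases hmh : pairZ v m = h
  · rw [if_pos hmh]; exact congrArg AddMonoidAlgebra.ofCoeff (Finsupp.filter_single_of_pos _ hmh)
  · rw [if_neg hmh]; exact congrArg AddMonoidAlgebra.ofCoeff (Finsupp.filter_single_of_neg _ hmh)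

set_option synthInstance.maxHeartbeats 1000000 in
lemma height_relation (f g F : LP) (v : NN) (φ : K ≃+* K)
    (hφ : IsAlgMutation v F φ) (hg : φ (ι f) = ι g) :
    (∀ h : ℤ, 0 ≤ h → piH v h g = piH v h f * F ^ h.toNat) ∧
    (∀ h : ℤ, h ≤ 0 → piH v h f = piH v h g * F ^ (-h).toNat) := by
  classical
  obtain ⟨hprim, hF0, hFv, hconst, hmono⟩ := hφ
  set N := f.coeff.support.sup (fun m => (pairZ v m).natAbs) with hNdef
  have hbound : ∀ m ∈ f.coeff.support, (pairZ v m).natAbs ≤ N :=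
    fun m hm => Finset.le_sup (f := fun m => (pairZ v m).natAbs) hm
  have hN : ∀ m ∈ f.coeff.support, 0 ≤ pairZ v m + N := by
    intro m hm
    have := hbound m hm
    omega
  have hkey := key_identity f g F v φ ⟨hprim, hF0, hFv, hconst, hmono⟩ hg N hN
  have hFpow : ∀ n : ℕ, (F ^ n : LP) ≠ 0 := fun n => pow_ne_zero n hF0
  have hstar : ∀ h : ℤ, piH v h g * F ^ N = piH v h f * F ^ (h + N).toNat := by
    intro h
    have h1 : piH v h (g * F ^ N) = piH v h g * F ^ N :=
      piH_mul_right0 v h g _ (supp_pow_zero_height hFv N)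
    have h2 : piH v h (g * F ^ N)
        = ∑ m ∈ f.coeff.support.filter (fun m => pairZ v m = h),
            AddMonoidAlgebra.single m (f.coeff m) * F ^ (h + N).toNat := by
      rw [hkey, piH_sum, Finset.sum_filter]
      refine Finset.sum_congr rfl fun m hm => ?_
      rw [piH_mul_right0 v h _ _ (supp_pow_zero_height hFv _)]
      by_cases hmh : pairZ v m = h
      · rw [if_pos hmh,
          show piH v h (AddMonoidAlgebra.single m (f.coeff m)) = AddMonoidAlgebra.single m (f.coeff m)
            from congrArg AddMonoidAlgebra.ofCoeff (Finsupp.filter_single_of_pos _ hmh), hmh]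
      · rw [if_neg hmh,
          show piH v h (AddMonoidAlgebra.single m (f.coeff m)) = 0
            from congrArg AddMonoidAlgebra.ofCoeff (Finsupp.filter_single_of_neg _ hmh), zero_mul]
    rw [← h1, h2, piH_as_sum, Finset.sum_mul]
  constructor
  · intro h h0
    have htoNat : (h + N).toNat = h.toNat + N := by omega
    have := hstar h
    rw [htoNat, pow_add, ← mul_assoc] at this
    exact mul_right_cancel₀ (hFpow N) this
  · intro h h0
    by_cases hcase : (-h).toNat ≤ N
    · have htoNat : (-h).toNat + (h + N).toNat = N := by omega
      have hsplit : (F : LP) ^ N = F ^ (-h).toNat * F ^ (h + N).toNat := by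
        rw [← pow_add, htoNat]
      have := hstar h
      rw [hsplit, ← mul_assoc] at this
      exact (mul_right_cancel₀ (hFpow _) this).symm
    · have hzf : piH v h f = 0 := by
        apply piH_eq_zero
        intro m hm
        have := hbound m hm
        omega
      have hzg : piH v h g = 0 := by
        have := hstar h
        rw [hzf, zero_mul] at this
        rcases mul_eq_zero.mp this with h' | h'
        · exact h'
        · exact absurd h' (hFpow N)
      rw [hzf, hzg, zero_mul]

/-- If `f` is a Laurent polynomial whose Newton polygon is a Fano polygon and
`g = φ*f` is the pullback of `f` under an algebraic mutation `φ = φ_{v,F}` (so `g` is again a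
Laurent polynomial), then `Newt f` is mutable with respect to `(v, Newt F)` and
`Newt g = mut_{v, Newt F}(Newt f)`. -/
theorem newton_polygon_mutates (f g F : LP) (v : NN) (φ : K ≃+* K)
    (hFano : IsFanoPolygon (Newt f))
    (hφ : IsAlgMutation v F φ)
    (hg : φ (ι f) = ι g) :
    IsMutationOf v (Newt F) (Newt f) (Newt g) := by
  classical
  obtain ⟨hprim, hF0, hFv, hconst, hmono⟩ := hφ
  obtain ⟨hApos, hAneg⟩ :=
    height_relation f g F v φ ⟨hprim, hF0, hFv, hconst, hmono⟩ hg
  have hNFne : (Newt F).Nonempty := Newt_nonempty hF0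
  have hNF0 : ∀ ψ ∈ Newt F, pairLin v ψ = 0 := by
    intro ψ hψ
    have := Newt_subset_hyperplane (v := v) (h := 0) hFv ψ hψ
    rw [pairLin_apply, this, Int.cast_zero]
  -- nonvanishing transfer between heights of f and g
  have hfg0 : ∀ h : ℤ, piH v h f ≠ 0 → piH v h g ≠ 0 := by
    intro h hne
    rcases le_or_gt 0 h with h0 | h0
    · rw [hApos h h0]
      exact mul_ne_zero hne (pow_ne_zero _ hF0)
    · intro hz
      rw [hAneg h h0.le, hz, zero_mul] at hne
      exact hne rfl
  have hgf0 : ∀ h : ℤ, piH v h g ≠ 0 → piH v h f ≠ 0 := by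
    intro h hne
    rcases le_or_gt 0 h with h0 | h0
    · intro hz
      rw [hApos h h0, hz, zero_mul] at hne
      exact hne rfl
    · rw [hAneg h h0.le]
      exact mul_ne_zero hne (pow_ne_zero _ hF0)
  -- per-height Newton polygon relations
  have hNpos : ∀ h : ℤ, 0 ≤ h → piH v h f ≠ 0 →
      Newt (piH v h g) = Newt (piH v h f) + (h : ℝ) • Newt F := by
    intro h h0 hne
    have hcast : ((h.toNat : ℕ) : ℝ) = (h : ℝ) := by
      exact_mod_cast congrArg (fun z : ℤ => (z : ℝ)) (Int.toNat_of_nonneg h0)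
    rw [hApos h h0, Newt_mul _ _ hne (pow_ne_zero _ hF0), Newt_pow F hF0, hcast]
  have hNneg : ∀ h : ℤ, h ≤ 0 → piH v h f ≠ 0 →
      Newt (piH v h f) = Newt (piH v h g) + ((-h : ℤ) : ℝ) • Newt F := by
    intro h h0 hne
    have hcast : (((-h).toNat : ℕ) : ℝ) = ((-h : ℤ) : ℝ) := by
      exact_mod_cast congrArg (fun z : ℤ => (z : ℝ))
        (Int.toNat_of_nonneg (neg_nonneg.mpr h0))
    rw [hAneg h h0, Newt_mul _ _ (hfg0 h hne) (pow_ne_zero _ hF0), Newt_pow F hF0, hcast]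
  -- membership helpers
  have hmemf : ∀ m ∈ f.coeff.support,
      toR m ∈ Newt (piH v (pairZ v m) f) ∧ piH v (pairZ v m) f ≠ 0 := by
    intro m hm
    have hmm : m ∈ (piH v (pairZ v m) f).coeff.support := by
      rw [support_piH, Finset.mem_filter]
      exact ⟨hm, rfl⟩
    exact ⟨subset_convexHull ℝ _ ⟨m, by exact_mod_cast hmm, rfl⟩,
      fun h0 => by rw [h0] at hmm; simp at hmm⟩
  have hmemg : ∀ m ∈ g.coeff.support,
      toR m ∈ Newt (piH v (pairZ v m) g) ∧ piH v (pairZ v m) g ≠ 0 := by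
    intro m hm
    have hmm : m ∈ (piH v (pairZ v m) g).coeff.support := by
      rw [support_piH, Finset.mem_filter]
      exact ⟨hm, rfl⟩
    exact ⟨subset_convexHull ℝ _ ⟨m, by exact_mod_cast hmm, rfl⟩,
      fun h0 => by rw [h0] at hmm; simp at hmm⟩
  have hsubf : ∀ h : ℤ, Newt (piH v h f) ⊆ Newt f := fun h =>
    Newt_mono (by rw [support_piH]; exact Finset.filter_subset _ _)
  have hsubg : ∀ h : ℤ, Newt (piH v h g) ⊆ Newt g := fun h =>
    Newt_mono (by rw [support_piH]; exact Finset.filter_subset _ _)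
  have hhtf : ∀ h : ℤ, ∀ x ∈ Newt (piH v h f), pairR v x = (h : ℝ) := fun h =>
    Newt_subset_hyperplane (fun m hm => by
      rw [support_piH] at hm
      exact (Finset.mem_filter.mp hm).2)
  have hhtg : ∀ h : ℤ, ∀ x ∈ Newt (piH v h g), pairR v x = (h : ℝ) := fun h =>
    Newt_subset_hyperplane (fun m hm => by
      rw [support_piH] at hm
      exact (Finset.mem_filter.mp hm).2)
  have hNfS : Newt f = convexHull ℝ ((f.coeff.support.image toR : Finset (ℝ × ℝ)) : Set (ℝ × ℝ)) := by
    rw [Newt, Finset.coe_image]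
  have hNgS : Newt g = convexHull ℝ ((g.coeff.support.image toR : Finset (ℝ × ℝ)) : Set (ℝ × ℝ)) := by
    rw [Newt, Finset.coe_image]
  -- master hypotheses, direction f → g
  have H1fg : ∀ a ∈ f.coeff.support.image toR, 0 ≤ pairLin v a →
      ∀ ψ ∈ Newt F, a + pairLin v a • ψ ∈ Newt g := by
    intro a ha h0 ψ hψ
    obtain ⟨m, hm, rfl⟩ := Finset.mem_image.mp ha
    have hk : pairLin v (toR m) = ((pairZ v m : ℤ) : ℝ) := by
      rw [pairLin_apply, pairR_toR]
    rw [hk] at h0 ⊢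
    have hk0 : 0 ≤ pairZ v m := by exact_mod_cast h0
    obtain ⟨hmem, hne⟩ := hmemf m hm
    apply hsubg (pairZ v m)
    rw [hNpos _ hk0 hne]
    exact Set.add_mem_add hmem (Set.smul_mem_smul_set hψ)
  have H2fg : ∀ a ∈ f.coeff.support.image toR, pairLin v a < 0 →
      ∃ y ∈ Newt g, pairLin v y = pairLin v a ∧
        ∃ ψ' ∈ Newt F, a = y + (-pairLin v a) • ψ' := by
    intro a ha h0
    obtain ⟨m, hm, rfl⟩ := Finset.mem_image.mp ha
    have hk : pairLin v (toR m) = ((pairZ v m : ℤ) : ℝ) := by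
      rw [pairLin_apply, pairR_toR]
    rw [hk] at h0 ⊢
    have hk0 : pairZ v m ≤ 0 := by
      have : pairZ v m < 0 := by exact_mod_cast h0
      omega
    obtain ⟨hmem, hne⟩ := hmemf m hm
    rw [hNneg _ hk0 hne] at hmem
    obtain ⟨y, hy, z, hz, hyz⟩ := hmem
    obtain ⟨ψ, hψF, rfl⟩ := hz
    refine ⟨y, hsubg _ hy, ?_, ψ, hψF, ?_⟩
    · rw [pairLin_apply, hhtg _ y hy]
    · have hsc : (-((pairZ v m : ℤ) : ℝ)) = (((-pairZ v m) : ℤ) : ℝ) := by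
        push_cast
        ring
      rw [hsc]
      exact hyz.symm
  -- master hypotheses, direction g → f (with the opposite functional)
  have hNF0' : ∀ ψ ∈ Newt F, (-(pairLin v)) ψ = 0 := fun ψ hψ => by
    rw [LinearMap.neg_apply, hNF0 ψ hψ, neg_zero]
  have H1gf : ∀ a ∈ g.coeff.support.image toR, 0 ≤ (-(pairLin v)) a →
      ∀ ψ ∈ Newt F, a + (-(pairLin v)) a • ψ ∈ Newt f := by
    intro a ha h0 ψ hψ
    obtain ⟨m, hm, rfl⟩ := Finset.mem_image.mp ha
    have hk : (-(pairLin v)) (toR m) = ((-(pairZ v m) : ℤ) : ℝ) := by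
      rw [LinearMap.neg_apply, pairLin_apply, pairR_toR]
      push_cast
      ring
    rw [hk] at h0 ⊢
    have hk0 : pairZ v m ≤ 0 := by
      have : (0 : ℤ) ≤ -(pairZ v m) := by exact_mod_cast h0
      omega
    obtain ⟨hmem, hne⟩ := hmemg m hm
    apply hsubf (pairZ v m)
    rw [hNneg _ hk0 (hgf0 _ hne)]
    exact Set.add_mem_add hmem (Set.smul_mem_smul_set hψ)
  have H2gf : ∀ a ∈ g.coeff.support.image toR, (-(pairLin v)) a < 0 →
      ∃ y ∈ Newt f, (-(pairLin v)) y = (-(pairLin v)) a ∧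
        ∃ ψ' ∈ Newt F, a = y + (-((-(pairLin v)) a)) • ψ' := by
    intro a ha h0
    obtain ⟨m, hm, rfl⟩ := Finset.mem_image.mp ha
    have hk : (-(pairLin v)) (toR m) = ((-(pairZ v m) : ℤ) : ℝ) := by
      rw [LinearMap.neg_apply, pairLin_apply, pairR_toR]
      push_cast
      ring
    rw [hk] at h0 ⊢
    have hk0 : 0 ≤ pairZ v m := by
      have : -(pairZ v m) < 0 := by exact_mod_cast h0
      omega
    obtain ⟨hmem, hne⟩ := hmemg m hm
    rw [hNpos _ hk0 (hgf0 _ hne)] at hmem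
    obtain ⟨y, hy, z, hz, hyz⟩ := hmem
    obtain ⟨ψ, hψF, rfl⟩ := hz
    refine ⟨y, hsubf _ hy, ?_, ψ, hψF, ?_⟩
    · rw [LinearMap.neg_apply, pairLin_apply, hhtf _ y hy]
      push_cast
      ring
    · have hsc : (-(((-pairZ v m) : ℤ) : ℝ)) = ((pairZ v m : ℤ) : ℝ) := by
        push_cast
        ring
      rw [hsc]
      exact hyz.symm
  -- the master conclusions
  have mA : ∀ {x : ℝ × ℝ}, x ∈ Newt f → 0 ≤ pairLin v x →
      ∀ {ψ : ℝ × ℝ}, ψ ∈ Newt F → x + pairLin v x • ψ ∈ Newt g := by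
    intro x hx h0 ψ hψ
    exact masterA (pairLin v) (f.coeff.support.image toR) (Newt g) (Newt F)
      (Newt_convex g) (Newt_convex F) H1fg H2fg (hNfS ▸ hx) h0 hψ
  have mB : ∀ {x : ℝ × ℝ}, x ∈ Newt f → pairLin v x ≤ 0 →
      ∃ y ∈ Newt g, pairLin v y = pairLin v x ∧
        ∃ ψ ∈ Newt F, x = y + (-pairLin v x) • ψ := by
    intro x hx h0
    exact masterB (pairLin v) (f.coeff.support.image toR) (Newt g) (Newt F)
      (Newt_convex g) (Newt_convex F) hNFne hNF0 H1fg H2fg (hNfS ▸ hx) h0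
  have mA' : ∀ {x : ℝ × ℝ}, x ∈ Newt g → 0 ≤ (-(pairLin v)) x →
      ∀ {ψ : ℝ × ℝ}, ψ ∈ Newt F → x + (-(pairLin v)) x • ψ ∈ Newt f := by
    intro x hx h0 ψ hψ
    exact masterA (-(pairLin v)) (g.coeff.support.image toR) (Newt f) (Newt F)
      (Newt_convex f) (Newt_convex F) H1gf H2gf (hNgS ▸ hx) h0 hψ
  have mB' : ∀ {x : ℝ × ℝ}, x ∈ Newt g → (-(pairLin v)) x ≤ 0 →
      ∃ y ∈ Newt f, (-(pairLin v)) y = (-(pairLin v)) x ∧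
        ∃ ψ ∈ Newt F, x = y + (-((-(pairLin v)) x)) • ψ := by
    intro x hx h0
    exact masterB (-(pairLin v)) (g.coeff.support.image toR) (Newt f) (Newt F)
      (Newt_convex f) (Newt_convex F) hNFne hNF0' H1gf H2gf (hNgS ▸ hx) h0
  -- assemble the mutation structure
  refine ⟨⟨hprim, mutation_data v F hprim hF0 hFv⟩,
    fun h => sliceAt (Newt g) v h, ?_, ?_⟩
  · -- slice conditions for negative heights
    intro h hneg
    constructor
    · -- polytope
      refine ⟨crossSet (pairLin v) ((h : ℤ) : ℝ) (g.coeff.support.image toR), ?_⟩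
      have hsc := slice_convexHull (pairLin v) ((h : ℤ) : ℝ) (g.coeff.support.image toR)
      rw [← hNgS] at hsc
      exact hsc
    · apply Set.Subset.antisymm
      · rintro x ⟨hxf, hxh⟩
        have hlx : pairLin v x = (h : ℝ) := by rw [pairLin_apply, hxh]
        have hx0 : pairLin v x ≤ 0 := by
          rw [hlx]
          exact_mod_cast hneg.le
        obtain ⟨y, hyT, hyl, ψ, hψ, hxy⟩ := mB hxf hx0
        have hyslice : y ∈ sliceAt (Newt g) v h :=
          ⟨hyT, by rw [← pairLin_apply, hyl, hlx]⟩
        have hsc : ((-h : ℤ) : ℝ) = -((h : ℤ) : ℝ) := by push_cast; ring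
        have hx' : x = y + ((-h : ℤ) : ℝ) • ψ := by
          rw [hsc, hxy, hlx]
        rw [hx']
        exact Set.add_mem_add hyslice (Set.smul_mem_smul_set hψ)
      · rintro z ⟨y, hy, w, hw, rfl⟩
        obtain ⟨ψ, hψ, rfl⟩ := hw
        obtain ⟨hyg, hyh⟩ := hy
        have hly : pairLin v y = (h : ℝ) := by rw [pairLin_apply, hyh]
        have h0' : 0 ≤ (-(pairLin v)) y := by
          rw [LinearMap.neg_apply, hly]
          simp only [Left.nonneg_neg_iff]
          exact_mod_cast hneg.le
        have hmem := mA' hyg h0' hψ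
        have he : y + ((-h : ℤ) : ℝ) • ψ = y + (-(pairLin v)) y • ψ := by
          rw [LinearMap.neg_apply, hly]
          have hsc : ((-h : ℤ) : ℝ) = -((h : ℤ) : ℝ) := by push_cast; ring
          rw [hsc]
        constructor
        · show y + ((-h : ℤ) : ℝ) • ψ ∈ Newt f
          rw [he]
          exact hmem
        · show pairR v (y + ((-h : ℤ) : ℝ) • ψ) = ((h : ℤ) : ℝ)
          have : pairLin v (y + ((-h : ℤ) : ℝ) • ψ) = (h : ℝ) := by
            rw [map_add, map_smul, hNF0 ψ hψ, smul_eq_mul, mul_zero, add_zero, hly]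
          rw [← pairLin_apply, this]
  · -- the polygon identity
    apply Set.Subset.antisymm
    · rw [Newt]
      apply convexHull_min _ (convex_convexHull ℝ _)
      rintro b ⟨m, hm, rfl⟩
      have hm' : m ∈ g.coeff.support := by exact_mod_cast hm
      have hbg : toR m ∈ Newt g := subset_convexHull ℝ _ ⟨m, hm, rfl⟩
      rcases lt_or_ge (pairZ v m) 0 with hk | hk
      · apply subset_convexHull
        left
        refine Set.mem_iUnion.mpr ⟨pairZ v m, Set.mem_iUnion.mpr ⟨hk, ?_⟩⟩
        exact ⟨hbg, pairR_toR v m⟩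
      · have h0' : (-(pairLin v)) (toR m) ≤ 0 := by
          rw [LinearMap.neg_apply, pairLin_apply, pairR_toR]
          simp only [neg_nonpos]
          exact_mod_cast hk
        obtain ⟨x, hxf, hxl, ψ, hψ, hyx⟩ := mB' hbg h0'
        apply subset_convexHull
        right
        refine Set.mem_iUnion.mpr ⟨pairZ v m, Set.mem_iUnion.mpr ⟨hk, ?_⟩⟩
        have hxslice : x ∈ sliceAt (Newt f) v (pairZ v m) := by
          refine ⟨hxf, ?_⟩
          have := hxl
          rw [LinearMap.neg_apply, LinearMap.neg_apply, pairLin_apply, pairLin_apply,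
            pairR_toR, neg_inj] at this
          exact this
        have he : toR m = x + ((pairZ v m : ℤ) : ℝ) • ψ := by
          have hsc : -((-(pairLin v)) (toR m)) = ((pairZ v m : ℤ) : ℝ) := by
            rw [LinearMap.neg_apply, pairLin_apply, pairR_toR]
            ring
          rw [← hsc]
          exact hyx
        rw [he]
        exact Set.add_mem_add hxslice (Set.smul_mem_smul_set hψ)
    · apply convexHull_min _ (Newt_convex g)
      rintro z (hz | hz)
      · obtain ⟨h, hz⟩ := Set.mem_iUnion.mp hz
        obtain ⟨hneg, hz⟩ := Set.mem_iUnion.mp hz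
        exact hz.1
      · obtain ⟨h, hz⟩ := Set.mem_iUnion.mp hz
        obtain ⟨hpos, hz⟩ := Set.mem_iUnion.mp hz
        obtain ⟨x, hx, w, hw, rfl⟩ := hz
        obtain ⟨ψ, hψ, rfl⟩ := hw
        obtain ⟨hxf, hxh⟩ := hx
        have hlx : pairLin v x = (h : ℝ) := by rw [pairLin_apply, hxh]
        have h0 : 0 ≤ pairLin v x := by
          rw [hlx]
          exact_mod_cast hpos
        have := mA hxf h0 hψ
        rw [hlx] at this
        exact this
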